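/- Let $Z:[0,1]^d\to\mathbb{R}$ have partial derivatives up to order $m=\lfloor\beta\rfloor$ with all derivatives of order $m$ Hölder continuous of exponent $\beta-m\in(0,1]$ with constant $M$. Let $\mathbf s$ be a multi-index with $|\mathbf s|>\beta$, and suppose weights $w_{\mathbf j}(x)$ satisfy $\sum_{\mathbf j}(x_{\mathbf j}-x)^{\mathbf r}w_{\mathbf j}(x)=0$ for all $|\mathbf r|\le m$ (note $m<|\mathbf s|$), $w_{\mathbf j}(x)=0$ if $\|x-x_{\mathbf j}\|_\infty>h$, and $\sum_{\mathbf j}|w_{\mathbf j}(x)|\le C_3 h^{-|\mathbf s|}$. Then $\sup_{x\in[0,1]^d}\big|\sum_{\mathbf j}w_{\mathbf j}(x)Z(x_{\mathbf j})\big|\le C_3\,M\,h^{\beta-|\mathbf s|}\sum_{|\mathbf k|=m}\frac{1}{\mathbf k!}$. -/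

import Mathlib

open Set Finset

lemma mvt_poly_le {F F' : ℝ → ℝ} {a b ε : ℝ} {n : ℕ} (hab : a ≤ b) (hε : 0 ≤ ε)
    (hF : ∀ t ∈ Icc a b, HasDerivWithinAt F (F' t) (Icc a b) t)
    (hFa : F a = 0)
    (hbd : ∀ t ∈ Icc a b, |F' t| ≤ ε * (t - a) ^ n / n.factorial) :
    |F b| ≤ ε * (b - a) ^ (n + 1) / (n + 1).factorial := by
  have hB : ∀ t : ℝ, HasDerivAt (fun t => ε * (t - a) ^ (n + 1) / (n + 1).factorial)
      (ε * (t - a) ^ n / n.factorial) t := by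
    intro t
    have h1 : HasDerivAt (fun t : ℝ => (t - a) ^ (n + 1))
        ((n + 1 : ℕ) * (t - a) ^ n * 1) t := by
      simpa using (((hasDerivAt_id t).sub_const a).fun_pow (n + 1))
    have h2 := (h1.const_mul ε).div_const ((n + 1).factorial : ℝ)
    refine h2.congr_deriv ?_
    rw [Nat.factorial_succ]
    push_cast
    have : (n.factorial : ℝ) ≠ 0 := Nat.cast_ne_zero.2 n.factorial_ne_zero
    field_simp
  have key := image_norm_le_of_norm_deriv_right_le_deriv_boundary
    (f := F) (f' := F') (a := a) (b := b)
    (fun t ht => (hF t ht).continuousWithinAt)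
    (fun t ht => (hF t (Ico_subset_Icc_self ht)).mono_of_mem_nhdsWithin
      (Icc_mem_nhdsGE_of_mem ht))
    (B := fun t => ε * (t - a) ^ (n + 1) / (n + 1).factorial)
    (B' := fun t => ε * (t - a) ^ n / n.factorial)
    (by simp [hFa]) hB
    (fun t ht => hbd t (Ico_subset_Icc_self ht))
  simpa using key (right_mem_Icc.2 hab)

lemma mvt_poly {F F' : ℝ → ℝ} {a b ε : ℝ} {n : ℕ} (hε : 0 ≤ ε)
    (hF : ∀ t ∈ uIcc a b, HasDerivWithinAt F (F' t) (uIcc a b) t)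
    (hFa : F a = 0)
    (hbd : ∀ t ∈ uIcc a b, |F' t| ≤ ε * |t - a| ^ n / n.factorial) :
    |F b| ≤ ε * |b - a| ^ (n + 1) / (n + 1).factorial := by
  rcases le_or_gt a b with hab | hab
  · rw [uIcc_of_le hab] at hF hbd
    have : |b - a| = b - a := abs_of_nonneg (by linarith)
    rw [this]
    refine mvt_poly_le hab hε hF hFa (fun t ht => ?_)
    have : |t - a| = t - a := abs_of_nonneg (by cases ht; linarith)
    rw [← this]; exact hbd t ht
  · -- reflect
    rw [uIcc_of_ge hab.le] at hF hbd
    have himg : ∀ t ∈ Icc a (2 * a - b), 2 * a - t ∈ Icc b a := by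
      intro t ht; cases ht; constructor <;> linarith
    have hG : ∀ t ∈ Icc a (2 * a - b),
        HasDerivWithinAt (fun t => F (2 * a - t)) (-(F' (2 * a - t))) (Icc a (2 * a - b)) t := by
      intro t ht
      have hin : HasDerivWithinAt (fun t : ℝ => 2 * a - t) (-1) (Icc a (2 * a - b)) t :=
        ((hasDerivAt_const t (2 * a)).sub (hasDerivAt_id t)).hasDerivWithinAt.congr_deriv
          (by norm_num)
      have := (hF (2 * a - t) (himg t ht)).comp t hin (fun s hs => himg s hs)
      exact this.congr_deriv (by ring)
    have key := mvt_poly_le (F := fun t => F (2 * a - t)) (F' := fun t => -(F' (2 * a - t)))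
      (by linarith) hε hG (by show F (2*a - a) = 0; rw [show 2*a-a = a by ring]; exact hFa)
      (fun t ht => by
        have h1 := hbd (2 * a - t) (himg t ht)
        have : |2 * a - t - a| = |t - a| := by rw [abs_sub_comm]; ring_nf
        rw [abs_neg]
        calc |F' (2 * a - t)| ≤ ε * |2 * a - t - a| ^ n / n.factorial := h1
        _ = ε * (t - a) ^ n / n.factorial := by
            rw [this, abs_of_nonneg (by cases ht; linarith)])
    have he : (2 * a - (2 * a - b)) = b := by ring
    have he2 : |b - a| = (2 * a - b - a) := by rw [abs_sub_comm]; cases le_or_gt a b with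
      | inl h => linarith
      | inr h => rw [abs_of_nonneg (by linarith)]; ring
    rw [he2]
    simpa [he] using key

lemma taylor1D (a c ε : ℝ) (hε : 0 ≤ ε) :
    ∀ (n : ℕ) (g : ℕ → ℝ → ℝ) (b : ℝ),
    (∀ p < n, ∀ t ∈ uIcc a b, HasDerivWithinAt (g p) (g (p+1) t) (uIcc a b) t) →
    (∀ t ∈ uIcc a b, |g n t - c| ≤ ε) →
    |g 0 b - (∑ p ∈ Finset.range n, g p a * (b - a) ^ p / p.factorial)
      - c * (b - a) ^ n / n.factorial| ≤ ε * |b - a| ^ n / n.factorial := by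
  intro n
  induction n with
  | zero => intro g b _ hg; simpa using hg b right_mem_uIcc
  | succ n IH =>
    intro g b hd hg
    have hF : ∀ t ∈ uIcc a b, HasDerivWithinAt
        (fun t => g 0 t - (∑ p ∈ Finset.range (n+1), g p a * (t - a) ^ p / p.factorial)
          - c * (t - a) ^ (n+1) / (n+1).factorial)
        (g 1 t - (∑ p ∈ Finset.range n, g (p+1) a * (t - a) ^ p / p.factorial)
          - c * (t - a) ^ n / n.factorial) (uIcc a b) t := by
      intro t ht
      have hc : HasDerivAt (fun u : ℝ => c * (u - a) ^ (n+1) / (n+1).factorial)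
          (c * (t - a) ^ n / n.factorial) t := by
        have h1 : HasDerivAt (fun u : ℝ => (u - a) ^ (n + 1))
            ((n + 1 : ℕ) * (t - a) ^ n * 1) t := by
          simpa using (((hasDerivAt_id t).sub_const a).fun_pow (n + 1))
        have h2 := (h1.const_mul c).div_const ((n + 1).factorial : ℝ)
        refine h2.congr_deriv ?_
        rw [Nat.factorial_succ]
        have : (n.factorial : ℝ) ≠ 0 := Nat.cast_ne_zero.2 n.factorial_ne_zero
        push_cast; field_simp
      have hpoly : HasDerivAt (fun u => ∑ p ∈ Finset.range (n+1), g p a * (u - a) ^ p / p.factorial)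
          (∑ p ∈ Finset.range n, g (p+1) a * (t - a) ^ p / p.factorial) t := by
        have h1 : ∀ p ∈ Finset.range (n+1), HasDerivAt
            (fun u => g p a * (u - a) ^ p / p.factorial)
            (g p a * (p * (t - a) ^ (p - 1)) / p.factorial) t := by
          intro p _
          simpa using ((((hasDerivAt_id t).sub_const a).pow p).const_mul (g p a)).div_const
            (p.factorial : ℝ)
        have h2 := HasDerivAt.fun_sum h1
        refine h2.congr_deriv ?_
        rw [Finset.sum_range_succ']
        simp only [Nat.cast_zero, zero_mul, mul_zero, zero_div, add_zero, Nat.factorial_zero,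
          Nat.cast_ofNat, pow_zero]
        refine Finset.sum_congr rfl fun p _ => ?_
        rw [Nat.factorial_succ, Nat.add_sub_cancel]
        have : (p.factorial : ℝ) ≠ 0 := Nat.cast_ne_zero.2 p.factorial_ne_zero
        push_cast; field_simp
      exact ((hd 0 n.succ_pos t ht).sub hpoly.hasDerivWithinAt).sub hc.hasDerivWithinAt
    have hFa : g 0 a - (∑ p ∈ Finset.range (n+1), g p a * (a - a) ^ p / p.factorial)
        - c * (a - a) ^ (n+1) / (n+1).factorial = 0 := by
      rw [Finset.sum_eq_single_of_mem 0 (Finset.mem_range.2 n.succ_pos)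
        (fun p _ hp => by simp [sub_self, zero_pow hp])]
      simp [sub_self]
    have hbd : ∀ t ∈ uIcc a b,
        |g 1 t - (∑ p ∈ Finset.range n, g (p+1) a * (t - a) ^ p / p.factorial)
          - c * (t - a) ^ n / n.factorial| ≤ ε * |t - a| ^ n / n.factorial := by
      intro t ht
      have hsub : uIcc a t ⊆ uIcc a b := uIcc_subset_uIcc left_mem_uIcc ht
      exact IH (fun p => g (p+1)) t
        (fun p hp s hs => (hd (p+1) (Nat.succ_lt_succ hp) s (hsub hs)).mono hsub)
        (fun s hs => hg s (hsub hs))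
    exact mvt_poly hε hF hFa hbd

section Tuples
variable {d m : ℕ}

def Bset (d m i N : ℕ) : Finset (Fin d → ℕ) :=
  (Fintype.piFinset fun _ : Fin d => Finset.range (m+1)).filter
    fun k => (∑ j, k j) ≤ N ∧ ∀ j : Fin d, (j : ℕ) < i → k j = 0

def Cset (d m i N : ℕ) : Finset (Fin d → ℕ) :=
  (Fintype.piFinset fun _ : Fin d => Finset.range (m+1)).filter
    fun k => (∑ j, k j) = N ∧ ∀ j : Fin d, (j : ℕ) < i → k j = 0

lemma mem_Bset {i N : ℕ} (hN : N ≤ m) {k : Fin d → ℕ} :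
    k ∈ Bset d m i N ↔ (∑ j, k j) ≤ N ∧ ∀ j : Fin d, (j : ℕ) < i → k j = 0 := by
  simp only [Bset, Finset.mem_filter, Fintype.mem_piFinset, Finset.mem_range]
  refine ⟨fun h => h.2, fun h => ⟨fun j => ?_, h⟩⟩
  have : k j ≤ ∑ t, k t := Finset.single_le_sum (f := k) (fun t _ => Nat.zero_le _)
    (Finset.mem_univ j)
  omega

lemma mem_Cset {i N : ℕ} (hN : N ≤ m) {k : Fin d → ℕ} :
    k ∈ Cset d m i N ↔ (∑ j, k j) = N ∧ ∀ j : Fin d, (j : ℕ) < i → k j = 0 := by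
  simp only [Cset, Finset.mem_filter, Fintype.mem_piFinset, Finset.mem_range]
  refine ⟨fun h => h.2, fun h => ⟨fun j => ?_, h⟩⟩
  have : k j ≤ ∑ t, k t := Finset.single_le_sum (f := k) (fun t _ => Nat.zero_le _)
    (Finset.mem_univ j)
  omega

lemma Bset_zero (i : ℕ) : Bset d m i 0 = {0} := by
  ext k
  rw [mem_Bset (Nat.zero_le m), Finset.mem_singleton]
  constructor
  · rintro ⟨h1, -⟩
    funext j
    have : k j ≤ ∑ t, k t := Finset.single_le_sum (f := k) (fun t _ => Nat.zero_le _)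
      (Finset.mem_univ j)
    simp only [Pi.zero_apply]; omega
  · rintro rfl; simp

lemma Cset_zero (i : ℕ) : Cset d m i 0 = {0} := by
  ext k
  rw [mem_Cset (Nat.zero_le m), Finset.mem_singleton]
  constructor
  · rintro ⟨h1, -⟩
    funext j
    have : k j ≤ ∑ t, k t := Finset.single_le_sum (f := k) (fun t _ => Nat.zero_le _)
      (Finset.mem_univ j)
    simp only [Pi.zero_apply]; omega
  · rintro rfl; simp

lemma Bset_top (N : ℕ) (hN : N ≤ m) : Bset d m d N = {0} := by
  ext k
  rw [mem_Bset hN, Finset.mem_singleton]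
  constructor
  · rintro ⟨-, h2⟩
    funext j
    exact h2 j j.isLt
  · rintro rfl
    exact ⟨by simp, fun _ _ => rfl⟩

lemma sum_update_tuple (κ : Fin d → ℕ) (ii : Fin d) (p : ℕ) :
    (∑ j, Function.update κ ii (κ ii + p) j) = (∑ j, κ j) + p := by
  rw [Finset.sum_update_of_mem (Finset.mem_univ ii), ← Finset.erase_eq,
    ← Finset.add_sum_erase _ κ (Finset.mem_univ ii)]
  omega

lemma sum_update_zero (k : Fin d → ℕ) (ii : Fin d) :
    (∑ j, Function.update k ii 0 j) + k ii = ∑ j, k j := by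
  rw [Finset.sum_update_of_mem (Finset.mem_univ ii), ← Finset.erase_eq, zero_add,
    ← Finset.add_sum_erase _ k (Finset.mem_univ ii)]
  omega

lemma prod_update_tuple {R : Type*} [CommMonoid R] (G : Fin d → ℕ → R) (k : Fin d → ℕ)
    (ii : Fin d) (p : ℕ) (hk : k ii = 0) (hG : G ii 0 = 1) :
    ∏ j, G j (Function.update k ii p j) = G ii p * ∏ j, G j (k j) := by
  have h1 : (fun j => G j (Function.update k ii p j))
      = Function.update (fun j => G j (k j)) ii (G ii p) := by
    funext j
    rcases eq_or_ne j ii with rfl | hj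
    · simp
    · simp [Function.update_of_ne hj]
  rw [h1, Finset.prod_update_of_mem (Finset.mem_univ ii), ← Finset.erase_eq,
    ← Finset.mul_prod_erase _ (fun j => G j (k j)) (Finset.mem_univ ii), hk, hG, one_mul]

lemma sum_Bset_split {R : Type*} [AddCommMonoid R] (ii : Fin d) (N : ℕ) (hN : N ≤ m)
    (f : (Fin d → ℕ) → R) :
    ∑ k ∈ Bset d m (ii : ℕ) N, f k
      = ∑ p ∈ Finset.range (N+1), ∑ k ∈ Bset d m ((ii : ℕ)+1) (N - p),
          f (Function.update k ii p) := by
  have hmaps : ∀ k ∈ Bset d m (ii : ℕ) N, k ii ∈ Finset.range (N+1) := by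
    intro k hk
    rw [mem_Bset hN] at hk
    have : k ii ≤ ∑ t, k t := Finset.single_le_sum (f := k) (fun t _ => Nat.zero_le _)
      (Finset.mem_univ ii)
    exact Finset.mem_range.2 (by omega)
  rw [← Finset.sum_fiberwise_of_maps_to hmaps f]
  refine Finset.sum_congr rfl fun p hp => ?_
  have hpN : p ≤ N := by simpa [Nat.lt_succ_iff] using hp
  refine Finset.sum_nbij' (fun k => Function.update k ii 0) (fun k => Function.update k ii p)
    ?_ ?_ ?_ ?_ ?_
  · intro k hk
    simp only [Finset.mem_filter] at hk
    obtain ⟨hk1, hk2⟩ := hk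
    rw [mem_Bset hN] at hk1
    rw [mem_Bset (by omega)]
    constructor
    · have hsz := sum_update_zero k ii
      rw [hk2] at hsz
      omega
    · intro j hj
      rcases eq_or_ne j ii with rfl | hne
      · simp
      · rw [Function.update_of_ne hne]
        refine hk1.2 j ?_
        have : (j : ℕ) ≠ (ii : ℕ) := fun h => hne (Fin.ext h)
        omega
  · intro k hk
    rw [mem_Bset (by omega)] at hk
    have hkii : k ii = 0 := hk.2 ii (by omega)
    simp only [Finset.mem_filter]
    refine ⟨?_, by simp⟩
    rw [mem_Bset hN]
    constructor
    · have hsz := sum_update_zero (Function.update k ii p) ii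
      rw [Function.update_idem, Function.update_self,
        show Function.update k ii 0 = k from by rw [← hkii, Function.update_eq_self]] at hsz
      omega
    · intro j hj
      have hne : j ≠ ii := fun h => by subst h; omega
      rw [Function.update_of_ne hne]
      exact hk.2 j (by omega)
  · intro k hk
    simp only [Finset.mem_filter] at hk
    rw [Function.update_idem, ← hk.2, Function.update_eq_self]
  · intro k hk
    rw [mem_Bset (by omega)] at hk
    rw [Function.update_idem, ← hk.2 ii (by omega), Function.update_eq_self]
  · intro k hk
    simp only [Finset.mem_filter] at hk
    rw [Function.update_idem, ← hk.2, Function.update_eq_self]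

lemma sum_Cset_split {R : Type*} [AddCommMonoid R] (ii : Fin d) (N : ℕ) (hN : N ≤ m)
    (f : (Fin d → ℕ) → R) :
    ∑ k ∈ Cset d m (ii : ℕ) N, f k
      = ∑ p ∈ Finset.range (N+1), ∑ k ∈ Cset d m ((ii : ℕ)+1) (N - p),
          f (Function.update k ii p) := by
  have hmaps : ∀ k ∈ Cset d m (ii : ℕ) N, k ii ∈ Finset.range (N+1) := by
    intro k hk
    rw [mem_Cset hN] at hk
    have : k ii ≤ ∑ t, k t := Finset.single_le_sum (f := k) (fun t _ => Nat.zero_le _)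
      (Finset.mem_univ ii)
    exact Finset.mem_range.2 (by omega)
  rw [← Finset.sum_fiberwise_of_maps_to hmaps f]
  refine Finset.sum_congr rfl fun p hp => ?_
  have hpN : p ≤ N := by simpa [Nat.lt_succ_iff] using hp
  refine Finset.sum_nbij' (fun k => Function.update k ii 0) (fun k => Function.update k ii p)
    ?_ ?_ ?_ ?_ ?_
  · intro k hk
    simp only [Finset.mem_filter] at hk
    obtain ⟨hk1, hk2⟩ := hk
    rw [mem_Cset hN] at hk1
    rw [mem_Cset (by omega)]
    constructor
    · have hsz := sum_update_zero k ii
      rw [hk2] at hsz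
      omega
    · intro j hj
      rcases eq_or_ne j ii with rfl | hne
      · simp
      · rw [Function.update_of_ne hne]
        refine hk1.2 j ?_
        have : (j : ℕ) ≠ (ii : ℕ) := fun h => hne (Fin.ext h)
        omega
  · intro k hk
    rw [mem_Cset (by omega)] at hk
    have hkii : k ii = 0 := hk.2 ii (by omega)
    simp only [Finset.mem_filter]
    refine ⟨?_, by simp⟩
    rw [mem_Cset hN]
    constructor
    · have hsz := sum_update_zero (Function.update k ii p) ii
      rw [Function.update_idem, Function.update_self,
        show Function.update k ii 0 = k from by rw [← hkii, Function.update_eq_self]] at hsz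
      omega
    · intro j hj
      have hne : j ≠ ii := fun h => by subst h; omega
      rw [Function.update_of_ne hne]
      exact hk.2 j (by omega)
  · intro k hk
    simp only [Finset.mem_filter] at hk
    rw [Function.update_idem, ← hk.2, Function.update_eq_self]
  · intro k hk
    rw [mem_Cset (by omega)] at hk
    rw [Function.update_idem, ← hk.2 ii (by omega), Function.update_eq_self]
  · intro k hk
    simp only [Finset.mem_filter] at hk
    rw [Function.update_idem, ← hk.2, Function.update_eq_self]

end Tuples

def Pmix {d : ℕ} (x y : Fin d → ℝ) (i : ℕ) : Fin d → ℝ := fun j => if (j : ℕ) < i then x j else y j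

lemma Pmix_zero {d : ℕ} (x y : Fin d → ℝ) : Pmix x y 0 = y := by
  funext j; simp [Pmix]

lemma Pmix_top {d : ℕ} (x y : Fin d → ℝ) : Pmix x y d = x := by
  funext j; simp [Pmix, j.isLt]

lemma taylor_multi {d : ℕ} {β M : ℝ} {m : ℕ} (hm : (m : ℝ) < β) (hM : 0 < M)
    (D : (Fin d → ℕ) → (Fin d → ℝ) → ℝ)
    (hderiv : ∀ b : Fin d → ℕ, (∑ i, b i) < m → ∀ i : Fin d,
      ∀ x ∈ Icc (0 : Fin d → ℝ) 1,
        HasDerivWithinAt (fun t : ℝ => D b (Function.update x i t))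
          (D (Function.update b i (b i + 1)) x) (Icc (0:ℝ) 1) (x i))
    (hhold : ∀ b : Fin d → ℕ, (∑ i, b i) = m →
      ∀ x ∈ Icc (0 : Fin d → ℝ) 1, ∀ y ∈ Icc (0 : Fin d → ℝ) 1,
        |D b x - D b y| ≤ M * dist x y ^ (β - m))
    (x y : Fin d → ℝ) (hx : x ∈ Icc (0 : Fin d → ℝ) 1) (hy : y ∈ Icc (0 : Fin d → ℝ) 1) :
    |D 0 y - ∑ k ∈ Bset d m 0 m, D k x * ∏ i, ((y i - x i) ^ (k i) / ((k i).factorial : ℝ))|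
      ≤ M * dist x y ^ (β - m) *
        ∑ k ∈ Cset d m 0 m, ∏ i, (|y i - x i| ^ (k i) / ((k i).factorial : ℝ)) := by
  have hβm : (0 : ℝ) ≤ β - m := by linarith
  have hε0 : 0 ≤ M * dist x y ^ (β - m) := by positivity
  -- membership facts
  have hx0 : ∀ j, (0:ℝ) ≤ x j ∧ x j ≤ 1 :=
    fun j => ⟨(Set.mem_Icc.1 hx).1 j, (Set.mem_Icc.1 hx).2 j⟩
  have hy0 : ∀ j, (0:ℝ) ≤ y j ∧ y j ≤ 1 :=
    fun j => ⟨(Set.mem_Icc.1 hy).1 j, (Set.mem_Icc.1 hy).2 j⟩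
  have key : ∀ jj i, i + jj = d → ∀ κ : Fin d → ℕ, (∑ t, κ t) ≤ m →
      |D κ (Pmix x y i) - ∑ k ∈ Bset d m i (m - ∑ t, κ t),
          D (κ + k) x * ∏ i', ((y i' - x i') ^ (k i') / ((k i').factorial : ℝ))|
        ≤ M * dist x y ^ (β - m) *
          ∑ k ∈ Cset d m i (m - ∑ t, κ t),
            ∏ i', (|y i' - x i'| ^ (k i') / ((k i').factorial : ℝ)) := by
    intro jj
    induction jj with
    | zero =>
      intro i hi κ hκ
      have hi' : i = d := by omega
      subst hi'
      rw [Pmix_top, Bset_top _ (Nat.sub_le m _), Finset.sum_singleton]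
      simp only [add_zero, Pi.zero_apply, pow_zero, Nat.factorial_zero, Nat.cast_one, div_one,
        Finset.prod_const_one, mul_one, sub_self, abs_zero]
      exact mul_nonneg hε0 (Finset.sum_nonneg fun k _ => Finset.prod_nonneg fun j _ => by
        positivity)
    | succ jj IH =>
      intro i hi κ hκ
      have hid : i < d := by omega
      set ii : Fin d := ⟨i, hid⟩ with hii
      have hiival : (ii : ℕ) = i := rfl
      set n : ℕ := m - ∑ t, κ t with hn
      have hnm : n ≤ m := by omega
      -- uIcc ⊆ [0,1]
      have hsub01 : uIcc (x ii) (y ii) ⊆ Icc (0:ℝ) 1 := by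
        intro t ht
        rw [Set.mem_uIcc] at ht
        have h1 := hx0 ii
        have h2 := hy0 ii
        rw [Set.mem_Icc]
        rcases ht with ⟨u1, u2⟩ | ⟨u1, u2⟩
        · exact ⟨by linarith [h1.1], by linarith [h2.2]⟩
        · exact ⟨by linarith [h2.1], by linarith [h1.2]⟩
      -- points in box
      have hz : ∀ t ∈ uIcc (x ii) (y ii),
          Function.update (Pmix x y (i+1)) ii t ∈ Icc (0:Fin d → ℝ) 1 := by
        intro t ht
        have h01 := hsub01 ht
        rw [Set.mem_Icc] at h01
        refine Set.mem_Icc.2 ⟨fun j => ?_, fun j => ?_⟩ <;>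
          rcases eq_or_ne j ii with rfl | hj
        · rw [Function.update_self]; exact h01.1
        · rw [Function.update_of_ne hj]
          simp only [Pmix]
          split
          · exact (hx0 j).1
          · exact (hy0 j).1
        · rw [Function.update_self]; exact h01.2
        · rw [Function.update_of_ne hj]
          simp only [Pmix]
          split
          · exact (hx0 j).2
          · exact (hy0 j).2
      -- distance control
      have hdistz : ∀ t ∈ uIcc (x ii) (y ii),
          dist (Function.update (Pmix x y (i+1)) ii t) x ≤ dist x y := by
        intro t ht
        rw [dist_pi_le_iff dist_nonneg]
        intro j
        rcases eq_or_ne j ii with rfl | hj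
        · rw [Function.update_self]
          have hle : dist (y ii) (x ii) ≤ dist y x := dist_le_pi_dist y x ii
          rw [dist_comm y x] at hle
          rw [Set.mem_uIcc] at ht
          rw [Real.dist_eq]
          rw [Real.dist_eq] at hle
          refine le_trans ?_ hle
          rcases ht with ⟨u1, u2⟩ | ⟨u1, u2⟩
          · rw [abs_of_nonneg (by linarith), abs_of_nonneg (by linarith)]; linarith
          · rw [abs_of_nonpos (by linarith), abs_of_nonpos (by linarith)]; linarith
        · rw [Function.update_of_ne hj]
          simp only [Pmix]
          split
          · simp [dist_nonneg]
          · rw [dist_comm]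
            exact dist_le_pi_dist x y j
      -- derivative chain
      have hd : ∀ p < n, ∀ t ∈ uIcc (x ii) (y ii),
          HasDerivWithinAt
            (fun t => D (Function.update κ ii (κ ii + p)) (Function.update (Pmix x y (i+1)) ii t))
            (D (Function.update κ ii (κ ii + (p+1))) (Function.update (Pmix x y (i+1)) ii t))
            (uIcc (x ii) (y ii)) t := by
        intro p hp t ht
        have hb' : (∑ t', Function.update κ ii (κ ii + p) t') < m := by
          rw [sum_update_tuple]; omega
        have h1 := hderiv _ hb' ii _ (hz t ht)
        simp only [Function.update_idem, Function.update_self] at h1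
        have h2 := h1.mono hsub01
        rw [← add_assoc]
        exact h2
      -- Hölder control of top derivative
      have hH : ∀ t ∈ uIcc (x ii) (y ii),
          |D (Function.update κ ii (κ ii + n)) (Function.update (Pmix x y (i+1)) ii t)
            - D (Function.update κ ii (κ ii + n)) x| ≤ M * dist x y ^ (β - m) := by
        intro t ht
        have hsum' : (∑ t', Function.update κ ii (κ ii + n) t') = m := by
          rw [sum_update_tuple]; omega
        have h1 := hhold _ hsum' _ (hz t ht) x hx
        refine le_trans h1 ?_
        exact mul_le_mul_of_nonneg_left
          (Real.rpow_le_rpow dist_nonneg (hdistz t ht) hβm) hM.le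
      -- Taylor estimate in coordinate ii
      have hT := taylor1D (x ii) (D (Function.update κ ii (κ ii + n)) x)
        (M * dist x y ^ (β - m)) hε0 n
        (fun p t => D (Function.update κ ii (κ ii + p)) (Function.update (Pmix x y (i+1)) ii t))
        (y ii) hd hH
      -- endpoint identifications
      have hPb : Function.update (Pmix x y (i+1)) ii (y ii) = Pmix x y i := by
        funext j
        rcases eq_or_ne j ii with rfl | hj
        · rw [Function.update_self]
          simp [Pmix, hiival]
        · rw [Function.update_of_ne hj]
          have hvj : (j : ℕ) ≠ i := fun h => hj (Fin.ext h)
          simp only [Pmix]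
          by_cases hji : (j:ℕ) < i
          · rw [if_pos (by omega), if_pos hji]
          · rw [if_neg (by omega), if_neg hji]
      have hPa : Function.update (Pmix x y (i+1)) ii (x ii) = Pmix x y (i+1) := by
        have : x ii = Pmix x y (i+1) ii := by simp [Pmix, hiival]
        rw [this, Function.update_eq_self]
      have hg0 : D (Function.update κ ii (κ ii + 0)) (Function.update (Pmix x y (i+1)) ii (y ii))
          = D κ (Pmix x y i) := by
        rw [add_zero, Function.update_eq_self, hPb]
      -- split of the polynomial sum
      have hQ : (∑ k ∈ Bset d m i n,
            D (κ + k) x * ∏ i', ((y i' - x i') ^ (k i') / ((k i').factorial : ℝ)))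
          = (∑ p ∈ Finset.range n, ((y ii - x ii) ^ p / (p.factorial : ℝ)) *
              (∑ k ∈ Bset d m (i+1) (n - p), D (Function.update κ ii (κ ii + p) + k) x *
                ∏ j, ((y j - x j) ^ (k j) / ((k j).factorial : ℝ))))
            + D (Function.update κ ii (κ ii + n)) x * (y ii - x ii) ^ n / (n.factorial : ℝ) := by
        rw [sum_Bset_split ii n hnm, Finset.sum_range_succ]
        congr 1
        · refine Finset.sum_congr rfl fun p hp => ?_
          rw [Finset.mul_sum]
          refine Finset.sum_congr rfl fun k hk => ?_
          have hkii : k ii = 0 := ((mem_Bset (by omega)).1 hk).2 ii (by omega)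
          rw [prod_update_tuple (fun j q => (y j - x j) ^ q / (q.factorial : ℝ)) k ii p hkii
            (by norm_num)]
          rw [show κ + Function.update k ii p = Function.update κ ii (κ ii + p) + k from
            funext fun j => by
              rcases eq_or_ne j ii with rfl | hj
              · simp [hkii]
              · simp [Function.update_of_ne hj]]
          ring
        · rw [Nat.sub_self, Bset_zero, Finset.sum_singleton]
          rw [prod_update_tuple (fun j q => (y j - x j) ^ q / (q.factorial : ℝ)) (0 : Fin d → ℕ) ii n rfl
            (by norm_num)]
          simp only [Pi.zero_apply, pow_zero, Nat.factorial_zero, Nat.cast_one, div_one,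
            Finset.prod_const_one, mul_one]
          rw [show κ + Function.update (0 : Fin d → ℕ) ii n = Function.update κ ii (κ ii + n) from
            funext fun j => by
              rcases eq_or_ne j ii with rfl | hj
              · simp
              · simp [Function.update_of_ne hj]]
          ring
      -- split of the remainder sum
      have hR : (∑ k ∈ Cset d m i n,
            ∏ i', (|y i' - x i'| ^ (k i') / ((k i').factorial : ℝ)))
          = (∑ p ∈ Finset.range n, (|y ii - x ii| ^ p / (p.factorial : ℝ)) *
              (∑ k ∈ Cset d m (i+1) (n - p),
                ∏ j, (|y j - x j| ^ (k j) / ((k j).factorial : ℝ))))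
            + |y ii - x ii| ^ n / (n.factorial : ℝ) := by
        rw [sum_Cset_split ii n hnm, Finset.sum_range_succ]
        congr 1
        · refine Finset.sum_congr rfl fun p hp => ?_
          rw [Finset.mul_sum]
          refine Finset.sum_congr rfl fun k hk => ?_
          have hkii : k ii = 0 := ((mem_Cset (by omega)).1 hk).2 ii (by omega)
          rw [prod_update_tuple (fun j q => |y j - x j| ^ q / (q.factorial : ℝ)) k ii p hkii
            (by norm_num)]
        · rw [Nat.sub_self, Cset_zero, Finset.sum_singleton]
          rw [prod_update_tuple (fun j q => |y j - x j| ^ q / (q.factorial : ℝ)) (0 : Fin d → ℕ) ii n rfl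
            (by norm_num)]
          simp
      -- induction hypothesis instances
      have hIH : ∀ p, p < n →
          |D (Function.update κ ii (κ ii + p)) (Pmix x y (i+1))
            - ∑ k ∈ Bset d m (i+1) (n - p), D (Function.update κ ii (κ ii + p) + k) x *
                ∏ j, ((y j - x j) ^ (k j) / ((k j).factorial : ℝ))|
          ≤ M * dist x y ^ (β - m) *
            ∑ k ∈ Cset d m (i+1) (n - p),
              ∏ j, (|y j - x j| ^ (k j) / ((k j).factorial : ℝ)) := by
        intro p hp
        have h1 := IH (i+1) (by omega) (Function.update κ ii (κ ii + p))
          (by rw [sum_update_tuple]; omega)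
        rw [sum_update_tuple] at h1
        have h2 : m - ((∑ t, κ t) + p) = n - p := by omega
        rw [h2] at h1
        exact h1
      -- assemble
      have key2 : D κ (Pmix x y i) - (∑ k ∈ Bset d m i n,
            D (κ + k) x * ∏ i', ((y i' - x i') ^ (k i') / ((k i').factorial : ℝ)))
          = ((fun p t => D (Function.update κ ii (κ ii + p))
                (Function.update (Pmix x y (i+1)) ii t)) 0 (y ii)
              - (∑ p ∈ Finset.range n, (fun p t => D (Function.update κ ii (κ ii + p))
                  (Function.update (Pmix x y (i+1)) ii t)) p (x ii)
                    * (y ii - x ii) ^ p / (p.factorial : ℝ))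
              - D (Function.update κ ii (κ ii + n)) x * (y ii - x ii) ^ n / (n.factorial : ℝ))
            + ∑ p ∈ Finset.range n, ((y ii - x ii) ^ p / (p.factorial : ℝ)) *
                (D (Function.update κ ii (κ ii + p)) (Pmix x y (i+1))
                  - ∑ k ∈ Bset d m (i+1) (n - p), D (Function.update κ ii (κ ii + p) + k) x *
                      ∏ j, ((y j - x j) ^ (k j) / ((k j).factorial : ℝ))) := by
        dsimp only
        rw [hg0, hQ, hPa]
        simp only [mul_sub]
        rw [Finset.sum_sub_distrib]
        have hcomm : ∑ p ∈ Finset.range n,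
            D (Function.update κ ii (κ ii + p)) (Pmix x y (i+1)) * (y ii - x ii) ^ p
              / (p.factorial : ℝ)
          = ∑ p ∈ Finset.range n, ((y ii - x ii) ^ p / (p.factorial : ℝ)) *
              D (Function.update κ ii (κ ii + p)) (Pmix x y (i+1)) :=
          Finset.sum_congr rfl fun p _ => by ring
        rw [hcomm]
        ring
      rw [key2]
      refine le_trans (abs_add_le _ _) ?_
      have hstep1 : |∑ p ∈ Finset.range n, ((y ii - x ii) ^ p / (p.factorial : ℝ)) *
              (D (Function.update κ ii (κ ii + p)) (Pmix x y (i+1))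
                - ∑ k ∈ Bset d m (i+1) (n - p), D (Function.update κ ii (κ ii + p) + k) x *
                    ∏ j, ((y j - x j) ^ (k j) / ((k j).factorial : ℝ)))|
          ≤ ∑ p ∈ Finset.range n, (|y ii - x ii| ^ p / (p.factorial : ℝ)) *
              (M * dist x y ^ (β - m) *
                ∑ k ∈ Cset d m (i+1) (n - p),
                  ∏ j, (|y j - x j| ^ (k j) / ((k j).factorial : ℝ))) := by
        refine le_trans (Finset.abs_sum_le_sum_abs _ _) (Finset.sum_le_sum fun p hp => ?_)
        rw [abs_mul, abs_div, abs_pow, Nat.abs_cast]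
        exact mul_le_mul_of_nonneg_left (hIH p (Finset.mem_range.1 hp)) (by positivity)
      refine le_trans (add_le_add hT hstep1) (le_of_eq ?_)
      rw [hR, mul_add, add_comm]
      congr 1
      · rw [Finset.mul_sum]
        exact Finset.sum_congr rfl fun p _ => by ring
      · ring
  have h0 := key d 0 (zero_add d) 0 (by simp)
  rw [Pmix_zero] at h0
  simpa using h0


/-- Envelope bound for rough paths: `Z` (encoded by its derivatives `D`, `D 0 = Z`) has
partial derivatives up to order `m = ⌊β⌋`, the order-`m` derivatives being Hölder of
exponent `β - m ∈ (0,1]` with constant `M`. For a multi-index `s` with `|s| > β` and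
weights annihilating all monomials of degree `≤ m`, localized at bandwidth `h` and with
absolute sums `≤ C₃ h^{-|s|}`, one has
`sup_x |∑_j w_j(x) Z(x_j)| ≤ C₃ M h^{β-|s|} ∑_{|k|=m} 1/k!`. -/
theorem rough_path_envelope_bound
    {d : ℕ} {ι : Type*} [Fintype ι]
    (β M C3 h : ℝ) (hM : 0 < M) (hC3 : 0 < C3) (hh : 0 < h) (hh1 : h ≤ 1)
    (m : ℕ) (hm : (m : ℝ) < β ∧ β ≤ m + 1)
    (s : Fin d → ℕ) (hsβ : β < ((∑ i, s i : ℕ) : ℝ))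
    (D : (Fin d → ℕ) → (Fin d → ℝ) → ℝ)
    (hderiv : ∀ b : Fin d → ℕ, (∑ i, b i) < m → ∀ i : Fin d,
      ∀ x ∈ Icc (0 : Fin d → ℝ) 1,
        HasDerivWithinAt (fun t : ℝ => D b (Function.update x i t))
          (D (Function.update b i (b i + 1)) x) (Icc (0:ℝ) 1) (x i))
    (hhold : ∀ b : Fin d → ℕ, (∑ i, b i) = m →
      ∀ x ∈ Icc (0 : Fin d → ℝ) 1, ∀ y ∈ Icc (0 : Fin d → ℝ) 1,
        |D b x - D b y| ≤ M * dist x y ^ (β - m))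
    (xj : ι → (Fin d → ℝ)) (hxj : ∀ j, xj j ∈ Icc (0 : Fin d → ℝ) 1)
    (w : (Fin d → ℝ) → ι → ℝ)
    (hrep : ∀ x ∈ Icc (0 : Fin d → ℝ) 1, ∀ r : Fin d → ℕ, (∑ i, r i) ≤ m →
      ∑ j, (∏ i, (xj j i - x i) ^ r i) * w x j = 0)
    (hloc : ∀ x ∈ Icc (0 : Fin d → ℝ) 1, ∀ j, h < dist x (xj j) → w x j = 0)
    (hsum : ∀ x ∈ Icc (0 : Fin d → ℝ) 1, ∑ j, |w x j| ≤ C3 / h ^ (∑ i, s i)) :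
    ∀ x ∈ Icc (0 : Fin d → ℝ) 1,
      |∑ j, w x j * D 0 (xj j)| ≤
        C3 * M * h ^ (β - ((∑ i, s i : ℕ) : ℝ)) *
          ∑ k ∈ Finset.Nat.antidiagonalTuple d m,
            (1 / ∏ i, (Nat.factorial (k i) : ℝ)) := by
  intro x hx
  have hβm : (0:ℝ) ≤ β - m := by linarith [hm.1]
  have key : ∀ j, |D 0 (xj j) - (∑ k ∈ Bset d m 0 m, D k x * ∏ i, ((xj j i - x i) ^ (k i) / ((k i).factorial : ℝ)))|
      ≤ M * dist x (xj j) ^ (β - m) *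
        ∑ k ∈ Cset d m 0 m, ∏ i, (|xj j i - x i| ^ (k i) / ((k i).factorial : ℝ)) :=
    fun j => taylor_multi hm.1 hM D hderiv hhold x (xj j) hx (hxj j)
  have hCanti : Cset d m 0 m = Finset.Nat.antidiagonalTuple d m := by
    ext k
    rw [mem_Cset le_rfl, Finset.Nat.mem_antidiagonalTuple]
    simp
  set S : ℝ := ∑ k ∈ Finset.Nat.antidiagonalTuple d m, (1 / ∏ i, (Nat.factorial (k i) : ℝ))
    with hS
  have hS0 : 0 ≤ S := Finset.sum_nonneg fun k _ => by positivity
  -- vanishing of the polynomial part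
  have hPoly0 : ∑ j, w x j * (∑ k ∈ Bset d m 0 m, D k x * ∏ i, ((xj j i - x i) ^ (k i) / ((k i).factorial : ℝ))) = 0 := by
    have h1 : ∀ k ∈ Bset d m 0 m,
        (∑ j, w x j * (D k x * ∏ i, ((xj j i - x i) ^ (k i) / ((k i).factorial : ℝ)))) = 0 := by
      intro k hk
      have hsum0 := hrep x hx k ((mem_Bset le_rfl).1 hk).1
      have h2 : (∑ j, w x j * (D k x * ∏ i, ((xj j i - x i) ^ (k i) / ((k i).factorial : ℝ))))
          = (D k x / ∏ i, ((k i).factorial : ℝ)) *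
            ∑ j, (∏ i, (xj j i - x i) ^ (k i)) * w x j := by
        rw [Finset.mul_sum]
        refine Finset.sum_congr rfl fun j _ => ?_
        rw [Finset.prod_div_distrib]
        ring
      rw [h2, hsum0, mul_zero]
    calc ∑ j, w x j * (∑ k ∈ Bset d m 0 m, D k x * ∏ i, ((xj j i - x i) ^ (k i) / ((k i).factorial : ℝ)))
        = ∑ j, ∑ k ∈ Bset d m 0 m,
            w x j * (D k x * ∏ i, ((xj j i - x i) ^ (k i) / ((k i).factorial : ℝ))) :=
          Finset.sum_congr rfl fun j _ => Finset.mul_sum _ _ _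
      _ = ∑ k ∈ Bset d m 0 m, ∑ j,
            w x j * (D k x * ∏ i, ((xj j i - x i) ^ (k i) / ((k i).factorial : ℝ))) :=
          Finset.sum_comm
      _ = 0 := Finset.sum_eq_zero h1
  have hsplit : ∑ j, w x j * D 0 (xj j) = ∑ j, w x j * (D 0 (xj j) - (∑ k ∈ Bset d m 0 m, D k x * ∏ i, ((xj j i - x i) ^ (k i) / ((k i).factorial : ℝ)))) := by
    have : ∑ j, w x j * (D 0 (xj j) - (∑ k ∈ Bset d m 0 m, D k x * ∏ i, ((xj j i - x i) ^ (k i) / ((k i).factorial : ℝ))))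
        = ∑ j, w x j * D 0 (xj j) - ∑ j, w x j * (∑ k ∈ Bset d m 0 m, D k x * ∏ i, ((xj j i - x i) ^ (k i) / ((k i).factorial : ℝ))) := by
      rw [← Finset.sum_sub_distrib]
      exact Finset.sum_congr rfl fun j _ => mul_sub _ _ _
    rw [this, hPoly0, sub_zero]
  -- per-point bound
  have hZj : ∀ j, |D 0 (xj j) - (∑ k ∈ Bset d m 0 m, D k x * ∏ i, ((xj j i - x i) ^ (k i) / ((k i).factorial : ℝ)))| * |w x j|
      ≤ (M * h ^ (β - (m:ℝ)) * (h ^ m * S)) * |w x j| := by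
    intro j
    rcases eq_or_ne (w x j) 0 with hw | hw
    · rw [hw, abs_zero, mul_zero, mul_zero]
    · refine mul_le_mul_of_nonneg_right ?_ (abs_nonneg _)
      have hdist : dist x (xj j) ≤ h := not_lt.1 fun hlt => hw (hloc x hx j hlt)
      refine le_trans (key j) ?_
      have hR1 : (∑ k ∈ Cset d m 0 m,
            ∏ i, (|xj j i - x i| ^ (k i) / ((k i).factorial : ℝ))) ≤ h ^ m * S := by
        rw [hCanti, hS, Finset.mul_sum]
        refine Finset.sum_le_sum fun k hk => ?_
        have hsumk : ∑ i, k i = m := Finset.Nat.mem_antidiagonalTuple.1 hk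
        have hcoord : ∀ i, |xj j i - x i| ≤ h := by
          intro i
          have h1 : dist (xj j i) (x i) ≤ dist (xj j) x := dist_le_pi_dist (xj j) x i
          rw [Real.dist_eq] at h1
          rw [dist_comm] at h1
          exact le_trans h1 hdist
        calc ∏ i, (|xj j i - x i| ^ (k i) / ((k i).factorial : ℝ))
            ≤ ∏ i, (h ^ (k i) / ((k i).factorial : ℝ)) := by
              refine Finset.prod_le_prod (fun i _ => by positivity) (fun i _ => ?_)
              gcongr
              exact hcoord i
          _ = h ^ m * (1 / ∏ i, ((k i).factorial : ℝ)) := by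
              rw [Finset.prod_div_distrib, Finset.prod_pow_eq_pow_sum, hsumk]
              ring
      have hRnn : (0:ℝ) ≤ ∑ k ∈ Cset d m 0 m,
          ∏ i, (|xj j i - x i| ^ (k i) / ((k i).factorial : ℝ)) :=
        Finset.sum_nonneg fun k _ => Finset.prod_nonneg fun i _ => by positivity
      refine mul_le_mul ?_ hR1 hRnn (by positivity)
      exact mul_le_mul_of_nonneg_left (Real.rpow_le_rpow dist_nonneg hdist hβm) hM.le
  calc |∑ j, w x j * D 0 (xj j)|
      = |∑ j, w x j * (D 0 (xj j) - (∑ k ∈ Bset d m 0 m, D k x * ∏ i, ((xj j i - x i) ^ (k i) / ((k i).factorial : ℝ))))| := by rw [hsplit]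
    _ ≤ ∑ j, |w x j * (D 0 (xj j) - (∑ k ∈ Bset d m 0 m, D k x * ∏ i, ((xj j i - x i) ^ (k i) / ((k i).factorial : ℝ))))| := Finset.abs_sum_le_sum_abs _ _
    _ = ∑ j, |D 0 (xj j) - (∑ k ∈ Bset d m 0 m, D k x * ∏ i, ((xj j i - x i) ^ (k i) / ((k i).factorial : ℝ)))| * |w x j| :=
        Finset.sum_congr rfl fun j _ => by rw [abs_mul, mul_comm]
    _ ≤ ∑ j, (M * h ^ (β - (m:ℝ)) * (h ^ m * S)) * |w x j| :=
        Finset.sum_le_sum fun j _ => hZj j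
    _ = (M * h ^ (β - (m:ℝ)) * (h ^ m * S)) * ∑ j, |w x j| := by rw [← Finset.mul_sum]
    _ ≤ (M * h ^ (β - (m:ℝ)) * (h ^ m * S)) * (C3 / h ^ (∑ i, s i)) := by
        refine mul_le_mul_of_nonneg_left (hsum x hx) ?_
        positivity
    _ = C3 * M * h ^ (β - ((∑ i, s i : ℕ) : ℝ)) * S := by
        rw [← Real.rpow_natCast h m, ← Real.rpow_natCast h (∑ i, s i),
          Real.rpow_sub hh, Real.rpow_sub hh]
        have h1 : (0:ℝ) < h ^ (((∑ i, s i : ℕ) : ℕ) : ℝ) := Real.rpow_pos_of_pos hh _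
        have h2 : (0:ℝ) < h ^ ((m : ℝ)) := Real.rpow_pos_of_pos hh _
        field_simp
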